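/- There exists a finite constant C (depending only on α) such that for all ε ∈ (0,1): ∫₀^ε ∫₀^1 p_s(y)² y^{α−1} dy ds ≤ C ε^{2(α−1)/α}. -/

import Mathlib

open MeasureTheory Real

open Set Filter Topology

/-- The symmetric α-stable heat kernel on ℝ:
`p_t(x) = (2π)⁻¹ ∫ cos(ξx) e^{−t|ξ|^α/2} dξ`. -/
noncomputable def stableKernel (α t x : ℝ) : ℝ :=
  (2 * Real.pi)⁻¹ * ∫ ξ : ℝ, Real.cos (ξ * x) * Real.exp (-(t * |ξ| ^ α) / 2)

noncomputable def Dq (α q : ℝ) : ℝ :=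
  (1/2 : ℝ) ^ (-(q+1)/α) * ((1/α) * Real.Gamma ((q+1)/α))

lemma Dq_nonneg {α q : ℝ} (hα : 0 < α) (hq : -1 < q) : 0 ≤ Dq α q := by
  have h := Real.Gamma_pos_of_pos (div_pos (show (0:ℝ) < q+1 by linarith) hα)
  exact mul_nonneg (Real.rpow_nonneg (by norm_num) _)
    (mul_nonneg (by positivity) h.le)

lemma rewr (s α q : ℝ) : (fun x : ℝ => x ^ q * Real.exp (-(s * x ^ α) / 2))
    = fun x : ℝ => x ^ q * Real.exp (-(s/2) * x ^ α) := by
  funext x; rw [show -(s * x ^ α) / 2 = -(s/2) * x ^ α by ring]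

lemma Kint {α q s : ℝ} (hα : 1 ≤ α) (hq : -1 < q) (hs : 0 < s) :
    IntegrableOn (fun x : ℝ => x ^ q * Real.exp (-(s * x ^ α) / 2)) (Ioi 0) := by
  rw [rewr]
  exact integrableOn_rpow_mul_exp_neg_mul_rpow hq (by linarith) (by positivity)

lemma Kval {α q s : ℝ} (hα : 0 < α) (hq : -1 < q) (hs : 0 < s) :
    ∫ x in Ioi (0:ℝ), x ^ q * Real.exp (-(s * x ^ α) / 2)
      = s ^ (-(q+1)/α) * Dq α q := by
  rw [rewr, integral_rpow_mul_exp_neg_mul_rpow hα hq (by positivity), Dq,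
    show s/2 = s * (1/2) by ring, Real.mul_rpow hs.le (by norm_num)]
  ring

lemma expInt {α s : ℝ} (hα : 1 ≤ α) (hs : 0 < s) :
    Integrable (fun ξ : ℝ => Real.exp (-(s * |ξ| ^ α) / 2)) := by
  have h0 : IntegrableOn (fun x : ℝ => Real.exp (-(s * x ^ α) / 2)) (Ioi 0) := by
    have := Kint (q := 0) hα (by norm_num) hs
    simpa [Real.rpow_zero] using this
  have h1 : IntegrableOn (fun ξ : ℝ => Real.exp (-(s * |ξ| ^ α) / 2)) (Ioi 0) :=
    h0.congr_fun (fun x hx => by rw [abs_of_pos hx]) measurableSet_Ioi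
  have h2 : IntegrableOn (fun ξ : ℝ => Real.exp (-(s * |ξ| ^ α) / 2)) (Iic 0) := by
    rw [← Measure.map_neg_eq_self (volume : Measure ℝ)]
    have m : MeasurableEmbedding fun x : ℝ => -x := (Homeomorph.neg ℝ).measurableEmbedding
    rw [m.integrableOn_map_iff]
    simp_rw [Function.comp_def, abs_neg, neg_preimage, neg_Iic, neg_zero]
    exact Iff.mpr integrableOn_Ici_iff_integrableOn_Ioi h1
  rw [← integrableOn_univ, ← Iic_union_Ioi (a := (0:ℝ))]
  exact h2.union h1

lemma absA {α s : ℝ} (hα : 1 < α) (hs : 0 < s) (y : ℝ) :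
    |stableKernel α s y| ≤ π⁻¹ * Dq α 0 * s ^ (-(1:ℝ)/α) := by
  have hα0 : (0:ℝ) < α := by linarith
  rw [stableKernel, abs_mul, abs_of_pos (show (0:ℝ) < (2*π)⁻¹ by positivity)]
  have h1 : |∫ ξ : ℝ, Real.cos (ξ * y) * Real.exp (-(s * |ξ| ^ α) / 2)|
      ≤ ∫ ξ : ℝ, Real.exp (-(s * |ξ| ^ α) / 2) := by
    have h0 : |∫ ξ : ℝ, Real.cos (ξ * y) * Real.exp (-(s * |ξ| ^ α) / 2)|
        ≤ ∫ ξ : ℝ, |Real.cos (ξ * y)| * Real.exp (-(s * |ξ| ^ α) / 2) := by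
      simpa [Real.norm_eq_abs] using norm_integral_le_integral_norm
        (μ := (volume : Measure ℝ))
        (fun ξ : ℝ => Real.cos (ξ * y) * Real.exp (-(s * |ξ| ^ α) / 2))
    refine h0.trans ?_
    refine integral_mono_of_nonneg
      (Eventually.of_forall fun ξ => by positivity)
      (expInt hα.le hs) (Eventually.of_forall fun ξ => ?_)
    exact mul_le_of_le_one_left (Real.exp_pos _).le (abs_cos_le_one _)
  have habs : (∫ ξ : ℝ, Real.exp (-(s * |ξ| ^ α) / 2))
      = 2 * ∫ x in Ioi (0:ℝ), Real.exp (-(s * x ^ α) / 2) :=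
    integral_comp_abs (f := fun x => Real.exp (-(s * x ^ α) / 2))
  have hK := Kval (α := α) (q := 0) hα0 (by norm_num) hs
  simp only [Real.rpow_zero, one_mul, zero_add] at hK
  have h2 : (∫ ξ : ℝ, Real.exp (-(s * |ξ| ^ α) / 2))
      = 2 * (s ^ (-(1:ℝ)/α) * Dq α 0) := by rw [habs, hK]
  calc (2*π)⁻¹ * |∫ ξ : ℝ, Real.cos (ξ * y) * Real.exp (-(s * |ξ| ^ α) / 2)|
      ≤ (2*π)⁻¹ * (2 * (s ^ (-(1:ℝ)/α) * Dq α 0)) := by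
        rw [← h2]; exact mul_le_mul_of_nonneg_left h1 (by positivity)
    _ = π⁻¹ * Dq α 0 * s ^ (-(1:ℝ)/α) := by
        field_simp

noncomputable def Gf (α s x : ℝ) : ℝ := Real.exp (-(s * x ^ α) / 2)
noncomputable def G1 (α s x : ℝ) : ℝ := -(s*α/2) * x ^ (α-1) * Gf α s x
noncomputable def G2 (α s x : ℝ) : ℝ :=
  (s*α/2)^2 * (x ^ (2*α-2) * Gf α s x) - (s*α/2)*(α-1) * (x ^ (α-2) * Gf α s x)
noncomputable def gf (α s y x : ℝ) : ℝ :=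
  Real.sin (x*y)/y * Gf α s x + Real.cos (x*y)/y^2 * G1 α s x

lemma Gf_pos {α s x : ℝ} : 0 < Gf α s x := Real.exp_pos _

lemma hasDerivAt_Gf {α s x : ℝ} (hx : 0 < x) :
    HasDerivAt (Gf α s) (G1 α s x) x := by
  have h1 : HasDerivAt (fun x : ℝ => x ^ α) (α * x ^ (α-1)) x :=
    Real.hasDerivAt_rpow_const (Or.inl hx.ne')
  have h2 : HasDerivAt (fun x : ℝ => -(s * x ^ α)/2) (-(s * (α * x ^ (α-1)))/2) x :=
    ((h1.const_mul s).neg).div_const 2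
  have h3 : HasDerivAt (Gf α s) (Gf α s x * (-(s * (α * x ^ (α-1)))/2)) x := h2.exp
  convert h3 using 1
  unfold G1
  ring

lemma hasDerivAt_G1 {α s x : ℝ} (hx : 0 < x) :
    HasDerivAt (G1 α s) (G2 α s x) x := by
  have ha : HasDerivAt (fun x : ℝ => x ^ (α-1)) ((α-1) * x ^ (α-1-1)) x :=
    Real.hasDerivAt_rpow_const (Or.inl hx.ne')
  have hb : HasDerivAt (fun x : ℝ => -(s*α/2) * x ^ (α-1))
      (-(s*α/2) * ((α-1) * x ^ (α-1-1))) x := ha.const_mul _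
  have hc : HasDerivAt (G1 α s)
      (-(s*α/2) * ((α-1) * x ^ (α-1-1)) * Gf α s x
        + (-(s*α/2) * x ^ (α-1)) * G1 α s x) x :=
    hb.mul (hasDerivAt_Gf (α := α) (s := s) hx)
  have hxx : x ^ (2*α-2) = x ^ (α-1) * x ^ (α-1) := by
    rw [← Real.rpow_add hx]; congr 1; ring
  have hxe : x ^ (α-2) = x ^ (α-1-1) := by congr 1; ring
  convert hc using 1
  unfold G2 G1
  rw [hxx, hxe]
  ring

lemma hasDerivAt_gf {α s y x : ℝ} (hy : 0 < y) (hx : 0 < x) :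
    HasDerivAt (gf α s y)
      (Real.cos (x*y) * Gf α s x + Real.cos (x*y)/y^2 * G2 α s x) x := by
  have hsin : HasDerivAt (fun x : ℝ => Real.sin (x*y)) (Real.cos (x*y) * y) x :=
    (hasDerivAt_mul_const y).sin
  have hcos : HasDerivAt (fun x : ℝ => Real.cos (x*y)) (-Real.sin (x*y) * y) x :=
    (hasDerivAt_mul_const y).cos
  have h1 : HasDerivAt (fun x : ℝ => Real.sin (x*y)/y * Gf α s x)
      (Real.cos (x*y) * y / y * Gf α s x + Real.sin (x*y)/y * G1 α s x) x :=
    (hsin.div_const y).mul (hasDerivAt_Gf (α := α) (s := s) hx)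
  have h2 : HasDerivAt (fun x : ℝ => Real.cos (x*y)/y^2 * G1 α s x)
      (-Real.sin (x*y) * y / y^2 * G1 α s x + Real.cos (x*y)/y^2 * G2 α s x) x :=
    (hcos.div_const (y^2)).mul (hasDerivAt_G1 (α := α) (s := s) hx)
  have h : HasDerivAt (gf α s y)
      ((Real.cos (x*y) * y / y * Gf α s x + Real.sin (x*y)/y * G1 α s x)
        + (-Real.sin (x*y) * y / y^2 * G1 α s x + Real.cos (x*y)/y^2 * G2 α s x)) x :=
    h1.add h2
  convert h using 1
  have hy' : y ≠ 0 := hy.ne'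
  field_simp
  ring

lemma continuousWithinAt_gf {α s y : ℝ} (hα : 1 < α) :
    ContinuousWithinAt (gf α s y) (Ici 0) 0 := by
  have cpow : ContinuousAt (fun x : ℝ => x ^ α) 0 :=
    Real.continuousAt_rpow_const 0 α (Or.inr (by linarith))
  have cpow1 : ContinuousAt (fun x : ℝ => x ^ (α-1)) 0 :=
    Real.continuousAt_rpow_const 0 (α-1) (Or.inr (by linarith))
  have cG : ContinuousAt (Gf α s) 0 :=
    Real.continuous_exp.continuousAt.comp (((continuousAt_const.mul cpow).neg).div_const 2)
  have cG1 : ContinuousAt (G1 α s) 0 := (continuousAt_const.mul cpow1).mul cG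
  have csin : ContinuousAt (fun x : ℝ => Real.sin (x*y)) 0 :=
    Real.continuous_sin.continuousAt.comp (continuousAt_id.mul continuousAt_const)
  have ccos : ContinuousAt (fun x : ℝ => Real.cos (x*y)) 0 :=
    Real.continuous_cos.continuousAt.comp (continuousAt_id.mul continuousAt_const)
  exact (((csin.div_const y).mul cG).add ((ccos.div_const (y^2)).mul cG1)).continuousWithinAt

lemma gf_zero {α s y : ℝ} (hα : 1 < α) : gf α s y 0 = 0 := by
  simp [gf, G1, Real.zero_rpow (show α - 1 ≠ 0 by intro h; linarith)]

lemma tendsto_Gf {α s : ℝ} (hα : 1 < α) (hs : 0 < s) :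
    Tendsto (Gf α s) atTop (𝓝 0) := by
  have h1 : Tendsto (fun x : ℝ => s/2 * x ^ α) atTop atTop :=
    (tendsto_rpow_atTop (by linarith)).const_mul_atTop (by positivity)
  have h2 : Tendsto (fun x : ℝ => -(s * x ^ α)/2) atTop atBot := by
    exact Tendsto.congr (fun x => by simp only [Function.comp_apply]; ring)
      (tendsto_neg_atTop_atBot.comp h1)
  exact Real.tendsto_exp_atBot.comp h2

lemma tendsto_x1Gf {α s : ℝ} (hα : 1 < α) (hs : 0 < s) :
    Tendsto (fun x : ℝ => x ^ (α-1) * Gf α s x) atTop (𝓝 0) := by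
  have ho := rpow_mul_exp_neg_mul_rpow_isLittleO_exp_neg (α-1) hα (show 0 < s/2 by positivity)
  have hexp : Tendsto (fun x : ℝ => Real.exp (-(1/2) * x)) atTop (𝓝 0) := by
    refine Real.tendsto_exp_atBot.comp ?_
    have := (tendsto_id (α := ℝ)).const_mul_atTop (show (0:ℝ) < 1/2 by norm_num)
    exact Tendsto.congr (fun x => by simp only [Function.comp_apply, id]; ring)
      (tendsto_neg_atTop_atBot.comp this)
  have := ho.isBigO.trans_tendsto hexp
  refine Tendsto.congr (fun x => ?_) this
  unfold Gf
  rw [show -(s/2) * x ^ α = -(s * x ^ α)/2 by ring]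

lemma tendsto_gf {α s y : ℝ} (hα : 1 < α) (hs : 0 < s) (hy : 0 < y) :
    Tendsto (gf α s y) atTop (𝓝 0) := by
  have hb : Tendsto (fun x : ℝ => 1/y * Gf α s x + (s*α/2)/y^2 * (x ^ (α-1) * Gf α s x))
      atTop (𝓝 0) := by
    have := ((tendsto_Gf hα hs).const_mul (1/y)).add
      ((tendsto_x1Gf hα hs).const_mul ((s*α/2)/y^2))
    simpa using this
  refine squeeze_zero_norm' ?_ hb
  filter_upwards [eventually_gt_atTop (0:ℝ)] with x hx
  have hE : (0:ℝ) < Gf α s x := Gf_pos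
  have hxp : (0:ℝ) < x ^ (α-1) := Real.rpow_pos_of_pos hx _
  have hc : (0:ℝ) < s*α/2 := by positivity
  have t1 : |Real.sin (x*y)/y * Gf α s x| ≤ 1/y * Gf α s x := by
    rw [abs_mul, abs_div, abs_of_pos hy, abs_of_pos hE]
    gcongr
    exact abs_sin_le_one _
  have t2 : |Real.cos (x*y)/y^2 * G1 α s x| ≤ (s*α/2)/y^2 * (x ^ (α-1) * Gf α s x) := by
    have hg1 : |G1 α s x| = s*α/2 * (x ^ (α-1) * Gf α s x) := by
      unfold G1
      rw [abs_mul, abs_mul, abs_neg, abs_of_pos hc, abs_of_pos hxp, abs_of_pos hE]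
      ring
    rw [abs_mul, hg1, abs_div, abs_of_pos (pow_pos hy 2)]
    rw [show (s*α/2)/y^2 * (x ^ (α-1) * Gf α s x)
        = 1/y^2 * (s*α/2 * (x ^ (α-1) * Gf α s x)) by ring]
    gcongr
    exact abs_cos_le_one _
  calc ‖gf α s y x‖ ≤ |Real.sin (x*y)/y * Gf α s x| + |Real.cos (x*y)/y^2 * G1 α s x| := by
        rw [Real.norm_eq_abs]; exact abs_add_le _ _
    _ ≤ 1/y * Gf α s x + (s*α/2)/y^2 * (x ^ (α-1) * Gf α s x) := add_le_add t1 t2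

lemma contOn_pow (p : ℝ) : ContinuousOn (fun x : ℝ => x ^ p) (Ioi 0) :=
  fun x hx => (Real.continuousAt_rpow_const x p (Or.inl (ne_of_gt hx))).continuousWithinAt

lemma GfContOn {α s : ℝ} : ContinuousOn (Gf α s) (Ioi 0) :=
  Real.continuous_exp.comp_continuousOn
    (((continuousOn_const.mul (contOn_pow α)).neg).div_const 2)

lemma G2ContOn {α s : ℝ} : ContinuousOn (G2 α s) (Ioi 0) :=
  (continuousOn_const.mul ((contOn_pow (2*α-2)).mul GfContOn)).sub
    (continuousOn_const.mul ((contOn_pow (α-2)).mul GfContOn))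

lemma cos_cont {y : ℝ} : Continuous (fun x : ℝ => Real.cos (x*y)) :=
  Real.continuous_cos.comp (continuous_id.mul continuous_const)

lemma GfInt {α s : ℝ} (hα : 1 < α) (hs : 0 < s) : IntegrableOn (Gf α s) (Ioi 0) := by
  have := Kint (q := 0) hα.le (by norm_num) hs
  simp only [Real.rpow_zero, one_mul] at this; exact this

lemma I1int {α s y : ℝ} (hα : 1 < α) (hs : 0 < s) :
    IntegrableOn (fun x : ℝ => Real.cos (x*y) * Gf α s x) (Ioi 0) := by
  refine (GfInt hα hs).mono' ?_ ?_
  · exact ((cos_cont.continuousOn.mul GfContOn)).aestronglyMeasurable measurableSet_Ioi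
  · refine Eventually.of_forall fun x => ?_
    rw [Real.norm_eq_abs, abs_mul, abs_of_pos Gf_pos]
    exact mul_le_of_le_one_left Gf_pos.le (abs_cos_le_one _)

lemma majInt {α s y : ℝ} (hα : 1 < α) (hs : 0 < s) :
    IntegrableOn (fun x : ℝ => 1/y^2 *
      ((s*α/2)^2 * (x ^ (2*α-2) * Real.exp (-(s * x ^ α) / 2))
        + (s*α/2)*(α-1) * (x ^ (α-2) * Real.exp (-(s * x ^ α) / 2)))) (Ioi 0) := by
  exact (((Kint hα.le (by linarith) hs).const_mul _).add
    ((Kint hα.le (by linarith) hs).const_mul _)).const_mul _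

lemma G2abs {α s x : ℝ} (hα : 1 < α) (hs : 0 < s) (hx : 0 < x) :
    |G2 α s x| ≤ (s*α/2)^2 * (x ^ (2*α-2) * Real.exp (-(s * x ^ α) / 2))
      + (s*α/2)*(α-1) * (x ^ (α-2) * Real.exp (-(s * x ^ α) / 2)) := by
  have hc : (0:ℝ) < s*α/2 := by positivity
  have h1 : (0:ℝ) < (s*α/2)^2 * (x ^ (2*α-2) * Real.exp (-(s * x ^ α) / 2)) := by
    have := Real.rpow_pos_of_pos hx (2*α-2); positivity
  have h2 : (0:ℝ) ≤ (s*α/2)*(α-1) * (x ^ (α-2) * Real.exp (-(s * x ^ α) / 2)) := by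
    refine mul_nonneg (mul_nonneg hc.le (by linarith)) ?_
    exact mul_nonneg (Real.rpow_pos_of_pos hx _).le (Real.exp_pos _).le
  unfold G2 Gf
  rw [sub_eq_add_neg]
  refine (abs_add_le _ _).trans ?_
  rw [abs_neg, abs_of_pos h1, abs_of_nonneg h2]

lemma I2int {α s y : ℝ} (hα : 1 < α) (hs : 0 < s) (hy : 0 < y) :
    IntegrableOn (fun x : ℝ => Real.cos (x*y)/y^2 * G2 α s x) (Ioi 0) := by
  refine (majInt (y := y) hα hs).mono' ?_ ?_
  · exact ((cos_cont.continuousOn.div_const _).mul G2ContOn).aestronglyMeasurable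
      measurableSet_Ioi
  · rw [ae_restrict_iff' measurableSet_Ioi]
    refine Eventually.of_forall fun x hx => ?_
    have habs2 := G2abs (s := s) hα hs hx
    rw [Real.norm_eq_abs, abs_mul, abs_div, abs_of_pos (pow_pos hy 2)]
    calc |Real.cos (x*y)|/y^2 * |G2 α s x|
        ≤ 1/y^2 * |G2 α s x| := by gcongr; exact abs_cos_le_one _
      _ ≤ _ := by gcongr

lemma oscB {α s y : ℝ} (hα : 1 < α) (hs : 0 < s) (hy : 0 < y) :
    |∫ x in Ioi (0:ℝ), Real.cos (x*y) * Gf α s x|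
      ≤ 1/y^2 * ((s*α/2)^2 * (s ^ (-(2*α-2+1)/α) * Dq α (2*α-2))
        + (s*α/2)*(α-1) * (s ^ (-(α-2+1)/α) * Dq α (α-2))) := by
  have I1 := I1int (y := y) hα hs
  have I2 := I2int hα hs hy
  have key := integral_Ioi_of_hasDerivAt_of_tendsto (f := gf α s y)
    (f' := fun x => Real.cos (x*y) * Gf α s x + Real.cos (x*y)/y^2 * G2 α s x)
    (continuousWithinAt_gf hα) (fun x hx => hasDerivAt_gf hy hx)
    (I1.add I2) (tendsto_gf hα hs hy)
  rw [gf_zero hα, sub_zero, integral_add I1 I2] at key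
  have h2 : (∫ x in Ioi (0:ℝ), Real.cos (x*y) * Gf α s x)
      = - ∫ x in Ioi (0:ℝ), Real.cos (x*y)/y^2 * G2 α s x := by linarith
  rw [h2, abs_neg]
  have h0 : |∫ x in Ioi (0:ℝ), Real.cos (x*y)/y^2 * G2 α s x|
      ≤ ∫ x in Ioi (0:ℝ), |Real.cos (x*y)/y^2 * G2 α s x| := by
    simpa only [Real.norm_eq_abs] using norm_integral_le_integral_norm
      (μ := (volume : Measure ℝ).restrict (Ioi 0))
      (fun x : ℝ => Real.cos (x*y)/y^2 * G2 α s x)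
  have h3 : (∫ x in Ioi (0:ℝ), |Real.cos (x*y)/y^2 * G2 α s x|)
      ≤ ∫ x in Ioi (0:ℝ), 1/y^2 *
        ((s*α/2)^2 * (x ^ (2*α-2) * Real.exp (-(s * x ^ α) / 2))
          + (s*α/2)*(α-1) * (x ^ (α-2) * Real.exp (-(s * x ^ α) / 2))) := by
    refine integral_mono_of_nonneg (Eventually.of_forall fun x => by positivity)
      (majInt hα hs) ?_
    refine (ae_restrict_iff' measurableSet_Ioi).2 (Eventually.of_forall fun x hx => ?_)
    have habs2 := G2abs (s := s) hα hs hx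
    simp only []
    rw [abs_mul, abs_div, abs_of_pos (pow_pos hy 2)]
    calc |Real.cos (x*y)|/y^2 * |G2 α s x|
        ≤ 1/y^2 * |G2 α s x| := by gcongr; exact abs_cos_le_one _
      _ ≤ _ := by gcongr
  have hval : (∫ x in Ioi (0:ℝ), 1/y^2 *
        ((s*α/2)^2 * (x ^ (2*α-2) * Real.exp (-(s * x ^ α) / 2))
          + (s*α/2)*(α-1) * (x ^ (α-2) * Real.exp (-(s * x ^ α) / 2))))
      = 1/y^2 * ((s*α/2)^2 * (s ^ (-(2*α-2+1)/α) * Dq α (2*α-2))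
        + (s*α/2)*(α-1) * (s ^ (-(α-2+1)/α) * Dq α (α-2))) := by
    rw [MeasureTheory.integral_const_mul,
      integral_add ((Kint hα.le (by linarith) hs).const_mul _)
        ((Kint hα.le (by linarith) hs).const_mul _),
      MeasureTheory.integral_const_mul, MeasureTheory.integral_const_mul,
      Kval (by linarith) (by linarith) hs, Kval (by linarith) (by linarith) hs]
  exact (h0.trans h3).trans_eq hval

noncomputable def CB (α : ℝ) : ℝ :=
  (α/2)^2 * Dq α (2*α-2) + (α/2)*(α-1) * Dq α (α-2)

lemma CB_nonneg {α : ℝ} (hα : 1 < α) : 0 ≤ CB α := by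
  have h1 := Dq_nonneg (α := α) (q := 2*α-2) (by linarith) (by linarith)
  have h2 := Dq_nonneg (α := α) (q := α-2) (by linarith) (by linarith)
  have h3 : (0:ℝ) ≤ (α/2)*(α-1) := by nlinarith
  unfold CB
  nlinarith [mul_nonneg (sq_nonneg (α/2)) h1, mul_nonneg h3 h2]

lemma absB {α s y : ℝ} (hα : 1 < α) (hs : 0 < s) (hy : 0 < y) :
    |stableKernel α s y| ≤ π⁻¹ * CB α * s ^ ((1:ℝ)/α) / y^2 := by
  rw [stableKernel, abs_mul, abs_of_pos (show (0:ℝ) < (2*π)⁻¹ by positivity)]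
  have heven : (∫ ξ : ℝ, Real.cos (ξ * y) * Real.exp (-(s * |ξ| ^ α) / 2))
      = 2 * ∫ x in Ioi (0:ℝ), Real.cos (x * y) * Real.exp (-(s * x ^ α) / 2) := by
    have h := integral_comp_abs (f := fun x => Real.cos (x * y) * Real.exp (-(s * x ^ α) / 2))
    rw [← h]
    congr 1
    funext ξ
    rcases abs_choice ξ with hc | hc
    · rw [hc]
    · rw [hc, neg_mul, Real.cos_neg]
  have hosc : |∫ x in Ioi (0:ℝ), Real.cos (x*y) * Real.exp (-(s * x ^ α) / 2)|
      ≤ 1/y^2 * ((s*α/2)^2 * (s ^ (-(2*α-2+1)/α) * Dq α (2*α-2))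
        + (s*α/2)*(α-1) * (s ^ (-(α-2+1)/α) * Dq α (α-2))) := oscB hα hs hy
  have p1 : s^(2:ℕ) * s ^ (-(2*α-2+1)/α) = s ^ ((1:ℝ)/α) := by
    rw [← Real.rpow_natCast s 2, ← Real.rpow_add hs]
    congr 1
    field_simp
    ring
  have p2 : s * s ^ (-(α-2+1)/α) = s ^ ((1:ℝ)/α) := by
    nth_rewrite 1 [← Real.rpow_one s]
    rw [← Real.rpow_add hs]
    congr 1
    field_simp
    ring
  calc (2*π)⁻¹ * |∫ ξ : ℝ, Real.cos (ξ * y) * Real.exp (-(s * |ξ| ^ α) / 2)|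
      = π⁻¹ * |∫ x in Ioi (0:ℝ), Real.cos (x*y) * Real.exp (-(s * x ^ α) / 2)| := by
        rw [heven, abs_mul, abs_two]
        have hπ : (π:ℝ) ≠ 0 := Real.pi_ne_zero
        rw [mul_inv]
        ring
    _ ≤ π⁻¹ * (1/y^2 * ((s*α/2)^2 * (s ^ (-(2*α-2+1)/α) * Dq α (2*α-2))
        + (s*α/2)*(α-1) * (s ^ (-(α-2+1)/α) * Dq α (α-2)))) := by
        refine mul_le_mul_of_nonneg_left hosc (by positivity)
    _ = π⁻¹ * CB α * s ^ ((1:ℝ)/α) / y^2 := by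
        unfold CB
        linear_combination (π⁻¹ * (1/y^2) * (α/2)^2 * Dq α (2*α-2)) * p1
          + (π⁻¹ * (1/y^2) * (α/2)*(α-1) * Dq α (α-2)) * p2

lemma inner_bound {α s : ℝ} (hα1 : 1 < α) (hα2 : α ≤ 2) (hs : 0 < s) (hs1 : s ≤ 1) :
    (∫ y in Ioc (0:ℝ) 1, (stableKernel α s y) ^ 2 * y ^ (α-1))
      ≤ ((π⁻¹ * Dq α 0)^2/α + (π⁻¹ * CB α)^2/(4-α)) * s ^ ((α-2)/α) := by
  have hα0 : (0:ℝ) < α := by linarith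
  set r : ℝ := s ^ ((1:ℝ)/α) with hr
  have hr0 : 0 < r := Real.rpow_pos_of_pos hs _
  have hr1 : r ≤ 1 := Real.rpow_le_one hs.le hs1 (by positivity)
  set A : ℝ := π⁻¹ * Dq α 0 with hA
  set B : ℝ := π⁻¹ * CB α with hB
  have hAnn : 0 ≤ A := by
    have := Dq_nonneg (α := α) (q := 0) hα0 (by norm_num)
    positivity
  have hBnn : 0 ≤ B := by
    have := CB_nonneg hα1
    positivity
  set h : ℝ → ℝ := fun y =>
    if y ≤ r then A^2 * (s ^ (-(1:ℝ)/α))^2 * y ^ (α-1)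
    else B^2 * (s ^ ((1:ℝ)/α))^2 * y ^ (α-5) with hh
  -- integrability of h on the two pieces
  have hint1 : IntegrableOn h (Ioc 0 r) := by
    have hi : IntegrableOn (fun y : ℝ => A^2 * (s ^ (-(1:ℝ)/α))^2 * y ^ (α-1)) (Ioc 0 r) := by
      refine Integrable.const_mul ?_ _
      exact (intervalIntegrable_iff_integrableOn_Ioc_of_le hr0.le).mp
        (intervalIntegral.intervalIntegrable_rpow' (by linarith))
    refine hi.congr_fun (fun y hy => ?_) measurableSet_Ioc
    rw [hh]
    simp only [if_pos hy.2]
  have hint2 : IntegrableOn h (Ioc r 1) := by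
    have hi : IntegrableOn (fun y : ℝ => B^2 * (s ^ ((1:ℝ)/α))^2 * y ^ (α-5)) (Ioc r 1) := by
      refine Integrable.const_mul ?_ _
      refine (intervalIntegrable_iff_integrableOn_Ioc_of_le hr1).mp
        (intervalIntegral.intervalIntegrable_rpow (Or.inr ?_))
      exact notMem_uIcc_of_lt hr0 zero_lt_one
    refine hi.congr_fun (fun y hy => ?_) measurableSet_Ioc
    rw [hh]
    simp only [if_neg (not_le.mpr hy.1)]
  have hsplit : Ioc (0:ℝ) 1 = Ioc 0 r ∪ Ioc r 1 := (Ioc_union_Ioc_eq_Ioc hr0.le hr1).symm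
  have hintall : IntegrableOn h (Ioc 0 1) := by
    rw [hsplit]
    exact hint1.union hint2
  -- pointwise bound
  have hptwise : ∀ y ∈ Ioc (0:ℝ) 1, (stableKernel α s y) ^ 2 * y ^ (α-1) ≤ h y := by
    intro y hy
    have hy0 : 0 < y := hy.1
    have hyp : (0:ℝ) ≤ y ^ (α-1) := (Real.rpow_pos_of_pos hy0 _).le
    by_cases hyr : y ≤ r
    · have hyval : h y = A^2 * (s ^ (-(1:ℝ)/α))^2 * y ^ (α-1) := by
        rw [hh]; simp only [if_pos hyr]
      rw [hyval]
      have h1 := absA (s := s) hα1 hs y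
      have h2 : (stableKernel α s y)^2 ≤ (A * s ^ (-(1:ℝ)/α))^2 := by
        rw [← sq_abs (stableKernel α s y)]
        have hnn : (0:ℝ) ≤ A * s ^ (-(1:ℝ)/α) := by positivity
        exact pow_le_pow_left₀ (abs_nonneg _) h1 2
      calc (stableKernel α s y)^2 * y ^ (α-1) ≤ (A * s ^ (-(1:ℝ)/α))^2 * y ^ (α-1) :=
            mul_le_mul_of_nonneg_right h2 hyp
        _ = A^2 * (s ^ (-(1:ℝ)/α))^2 * y ^ (α-1) := by ring
    · have hyval : h y = B^2 * (s ^ ((1:ℝ)/α))^2 * y ^ (α-5) := by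
        rw [hh]; simp only [if_neg hyr]
      rw [hyval]
      push_neg at hyr
      have h1 := absB hα1 hs hy0
      have h2 : |stableKernel α s y| * y^2 ≤ B * s ^ ((1:ℝ)/α) := by
        rw [← le_div_iff₀ (by positivity)]
        exact h1
      have h3 : (stableKernel α s y)^2 * (y^2)^2 ≤ (B * s ^ ((1:ℝ)/α))^2 := by
        have := pow_le_pow_left₀ (by positivity) h2 2
        calc (stableKernel α s y)^2 * (y^2)^2 = (|stableKernel α s y| * y^2)^2 := by
              rw [mul_pow, sq_abs]
          _ ≤ (B * s ^ ((1:ℝ)/α))^2 := this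
      have h4 : y ^ (α-1) = y ^ (α-5) * (y^2)^2 := by
        have : ((y^2)^2 : ℝ) = y ^ ((4:ℕ) : ℝ) := by
          rw [Real.rpow_natCast]; ring
        rw [this, ← Real.rpow_add hy0]
        congr 1
        push_cast
        ring
      calc (stableKernel α s y)^2 * y ^ (α-1)
          = ((stableKernel α s y)^2 * (y^2)^2) * y ^ (α-5) := by rw [h4]; ring
        _ ≤ (B * s ^ ((1:ℝ)/α))^2 * y ^ (α-5) :=
            mul_le_mul_of_nonneg_right h3 (Real.rpow_pos_of_pos hy0 _).le
        _ = B^2 * (s ^ ((1:ℝ)/α))^2 * y ^ (α-5) := by ring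
  -- put it together
  have hmono : (∫ y in Ioc (0:ℝ) 1, (stableKernel α s y) ^ 2 * y ^ (α-1))
      ≤ ∫ y in Ioc (0:ℝ) 1, h y := by
    refine integral_mono_of_nonneg ?_ hintall ?_
    · refine (ae_restrict_iff' measurableSet_Ioc).2 (Eventually.of_forall fun y hy => ?_)
      exact mul_nonneg (sq_nonneg _) (Real.rpow_pos_of_pos hy.1 _).le
    · exact (ae_restrict_iff' measurableSet_Ioc).2 (Eventually.of_forall hptwise)
  have hval1 : (∫ y in Ioc (0:ℝ) r, h y)
      = A^2 * (s ^ (-(1:ℝ)/α))^2 * (s/α) := by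
    have e1 : (∫ y in Ioc (0:ℝ) r, h y)
        = ∫ y in Ioc (0:ℝ) r, A^2 * (s ^ (-(1:ℝ)/α))^2 * y ^ (α-1) := by
      refine setIntegral_congr_fun measurableSet_Ioc (fun y hy => ?_)
      rw [hh]; simp only [if_pos hy.2]
    rw [e1, MeasureTheory.integral_const_mul,
      ← intervalIntegral.integral_of_le hr0.le,
      integral_rpow (Or.inl (by linarith))]
    have : r ^ (α-1+1) = s := by
      rw [show α-1+1 = α by ring, hr, ← Real.rpow_mul hs.le]
      rw [show (1:ℝ)/α * α = 1 by field_simp]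
      exact Real.rpow_one s
    rw [Real.zero_rpow (by intro hz; rw [show α-1+1 = α by ring] at hz; linarith), this]
    rw [show α - 1 + 1 = α by ring]
    ring
  have hval2 : (∫ y in Ioc r 1, h y)
      ≤ B^2 * (s ^ ((1:ℝ)/α))^2 * (s ^ ((α-4)/α) / (4-α)) := by
    have e2 : (∫ y in Ioc r 1, h y)
        = ∫ y in Ioc r 1, B^2 * (s ^ ((1:ℝ)/α))^2 * y ^ (α-5) := by
      refine setIntegral_congr_fun measurableSet_Ioc (fun y hy => ?_)
      rw [hh]; simp only [if_neg (not_le.mpr hy.1)]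
    have hr4 : r ^ (α-4) = s ^ ((α-4)/α) := by
      rw [hr, ← Real.rpow_mul hs.le]
      congr 1
      field_simp
    have hval : (∫ y in Ioc r 1, y ^ (α-5)) = (1 - r ^ (α-4))/(α-4) := by
      rw [← intervalIntegral.integral_of_le hr1, integral_rpow
        (Or.inr ⟨by intro hz; linarith [hz], notMem_uIcc_of_lt hr0 zero_lt_one⟩),
        show α - 5 + 1 = α - 4 by ring, Real.one_rpow]
    rw [e2, MeasureTheory.integral_const_mul, hval]
    have hb1 : (1 - r ^ (α-4))/(α-4) ≤ r ^ (α-4)/(4-α) := by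
      have h1r : (1:ℝ) ≤ r ^ (α-4) :=
        Real.one_le_rpow_of_pos_of_le_one_of_nonpos hr0 hr1 (by linarith)
      have heq : (1 - r ^ (α-4))/(α-4) = (r ^ (α-4) - 1)/(4-α) := by
        rw [show α-4 = -(4-α) by ring, div_neg, ← neg_div]
        ring_nf
      rw [heq]
      have h4α : (0:ℝ) < 4 - α := by linarith
      exact (div_le_div_iff_of_pos_right h4α).2 (by linarith)
    calc B^2 * (s ^ ((1:ℝ)/α))^2 * ((1 - r ^ (α-4))/(α-4))
        ≤ B^2 * (s ^ ((1:ℝ)/α))^2 * (r ^ (α-4)/(4-α)) := by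
          refine mul_le_mul_of_nonneg_left hb1 (by positivity)
      _ = B^2 * (s ^ ((1:ℝ)/α))^2 * (s ^ ((α-4)/α) / (4-α)) := by rw [hr4]
  -- power algebra
  have pw1 : (s ^ (-(1:ℝ)/α))^2 * s = s ^ ((α-2)/α) := by
    rw [← Real.rpow_natCast (s ^ (-(1:ℝ)/α)) 2, ← Real.rpow_mul hs.le]
    nth_rewrite 2 [← Real.rpow_one s]
    rw [← Real.rpow_add hs]
    congr 1
    field_simp
    ring
  have pw2 : (s ^ ((1:ℝ)/α))^2 * s ^ ((α-4)/α) = s ^ ((α-2)/α) := by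
    rw [← Real.rpow_natCast (s ^ ((1:ℝ)/α)) 2, ← Real.rpow_mul hs.le, ← Real.rpow_add hs]
    congr 1
    field_simp
    ring
  calc (∫ y in Ioc (0:ℝ) 1, (stableKernel α s y) ^ 2 * y ^ (α-1))
      ≤ ∫ y in Ioc (0:ℝ) 1, h y := hmono
    _ = (∫ y in Ioc (0:ℝ) r, h y) + ∫ y in Ioc r 1, h y := by
        rw [hsplit, setIntegral_union (Ioc_disjoint_Ioc_of_le le_rfl) measurableSet_Ioc hint1 hint2]
    _ ≤ A^2 * (s ^ (-(1:ℝ)/α))^2 * (s/α) + B^2 * (s ^ ((1:ℝ)/α))^2 * (s ^ ((α-4)/α) / (4-α)) :=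
        by rw [hval1]; exact add_le_add_right hval2 _
    _ = ((π⁻¹ * Dq α 0)^2/α + (π⁻¹ * CB α)^2/(4-α)) * s ^ ((α-2)/α) := by
        rw [hA, hB] at *
        linear_combination ((π⁻¹ * Dq α 0)^2/α) * pw1 + ((π⁻¹ * CB α)^2/(4-α)) * pw2

/-- There is a finite constant `C` (depending only on `α`) such that for all
`ε ∈ (0,1)`: `∫₀^ε ∫₀^1 p_s(y)² y^{α−1} dy ds ≤ C ε^{2(α−1)/α}`. -/
theorem stmt_8 (α : ℝ) (hα : α ∈ Set.Ioc (1 : ℝ) 2) :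
    ∃ C : ℝ, ∀ ε ∈ Set.Ioo (0 : ℝ) 1,
      (∫ s in Set.Ioc (0 : ℝ) ε, ∫ y in Set.Ioc (0 : ℝ) 1,
          (stableKernel α s y) ^ 2 * y ^ (α - 1))
        ≤ C * ε ^ (2 * (α - 1) / α) := by
  obtain ⟨hα1, hα2⟩ := hα
  have hα0 : (0:ℝ) < α := by linarith
  set Kt : ℝ := ((π⁻¹ * Dq α 0)^2/α + (π⁻¹ * CB α)^2/(4-α)) with hK
  refine ⟨Kt / (2*(α-1)/α), fun ε hε => ?_⟩
  have hε0 := hε.1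
  have hε1 := hε.2
  have hq : (-1:ℝ) < (α-2)/α := by
    rw [lt_div_iff₀ hα0]
    linarith
  have hmaj : IntegrableOn (fun s : ℝ => Kt * s ^ ((α-2)/α)) (Ioc 0 ε) := by
    refine Integrable.const_mul ?_ _
    exact (intervalIntegrable_iff_integrableOn_Ioc_of_le hε0.le).mp
      (intervalIntegral.intervalIntegrable_rpow' hq)
  have hmono : (∫ s in Ioc (0:ℝ) ε, ∫ y in Ioc (0:ℝ) 1, (stableKernel α s y)^2 * y^(α-1))
      ≤ ∫ s in Ioc (0:ℝ) ε, Kt * s ^ ((α-2)/α) := by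
    refine integral_mono_of_nonneg ?_ hmaj ?_
    · refine (ae_restrict_iff' measurableSet_Ioc).2 (Eventually.of_forall fun s hsm => ?_)
      refine setIntegral_nonneg measurableSet_Ioc fun y hy => ?_
      exact mul_nonneg (sq_nonneg _) (Real.rpow_pos_of_pos hy.1 _).le
    · refine (ae_restrict_iff' measurableSet_Ioc).2 (Eventually.of_forall fun s hsm => ?_)
      exact inner_bound hα1 hα2 hsm.1 (le_trans hsm.2 hε1.le)
  have hpos : (0:ℝ) < 2*(α-1)/α := div_pos (by linarith) hα0
  have hvalue : (∫ s in Ioc (0:ℝ) ε, Kt * s ^ ((α-2)/α))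
      = Kt / (2*(α-1)/α) * ε ^ (2*(α-1)/α) := by
    rw [MeasureTheory.integral_const_mul, ← intervalIntegral.integral_of_le hε0.le,
      integral_rpow (Or.inl hq)]
    have hee : (α-2)/α + 1 = 2*(α-1)/α := by field_simp; ring
    rw [hee, Real.zero_rpow hpos.ne', sub_zero]
    ring
  exact hmono.trans_eq hvalue
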